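/- Let b′ : K → L and g : L → G be injective graph morphisms between labelled directed graphs such that g satisfies the dangling condition. Define V_D = V_G − g_V(V_L − b′_V(V_K)) and E_D = E_G − g_E(E_L − b′_E(E_K)), and let D be obtained from G by restricting the node set to V_D and the edge set to E_D (keeping the source, target and labelling functions of G). Then D is a well-formed labelled directed graph: V_D and E_D are finite, and for every e ∈ E_D both s_G(e) ∈ V_D and t_G(e) ∈ V_D. -/

import Mathlib

/-- A (pre)graph: node set, edge set, source/target functions and labelling
functions for nodes and edges. -/
structure PreGraph (V E X Y : Type) where
  nodes : Set V
  edges : Set E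
  src : E → V
  tgt : E → V
  labV : V → X
  labE : E → Y

/-- Well-formedness of a labelled directed graph: finite node and edge sets,
and sources/targets of edges are nodes. -/
structure PreGraph.IsGraph {V E X Y : Type} (G : PreGraph V E X Y) : Prop where
  finite_nodes : G.nodes.Finite
  finite_edges : G.edges.Finite
  src_mem : ∀ e ∈ G.edges, G.src e ∈ G.nodes
  tgt_mem : ∀ e ∈ G.edges, G.tgt e ∈ G.nodes

/-- A pair of node and edge mappings. -/
structure PreMorph (V₁ E₁ V₂ E₂ : Type) where
  fv : V₁ → V₂
  fe : E₁ → E₂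

/-- Componentwise composition of morphisms. -/
def PreMorph.comp {V₁ E₁ V₂ E₂ V₃ E₃ : Type}
    (g : PreMorph V₂ E₂ V₃ E₃) (f : PreMorph V₁ E₁ V₂ E₂) :
    PreMorph V₁ E₁ V₃ E₃ :=
  ⟨g.fv ∘ f.fv, g.fe ∘ f.fe⟩

/-- `f` is a graph morphism from `G` to `H`: it maps nodes to nodes and edges
to edges, preserves sources and targets, and preserves node and edge labels. -/
structure IsMorphism {V₁ E₁ V₂ E₂ X Y : Type}
    (G : PreGraph V₁ E₁ X Y) (H : PreGraph V₂ E₂ X Y)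
    (f : PreMorph V₁ E₁ V₂ E₂) : Prop where
  node_range : ∀ v ∈ G.nodes, f.fv v ∈ H.nodes
  edge_range : ∀ e ∈ G.edges, f.fe e ∈ H.edges
  src_pres : ∀ e ∈ G.edges, f.fv (G.src e) = H.src (f.fe e)
  tgt_pres : ∀ e ∈ G.edges, f.fv (G.tgt e) = H.tgt (f.fe e)
  labV_pres : ∀ v ∈ G.nodes, G.labV v = H.labV (f.fv v)
  labE_pres : ∀ e ∈ G.edges, G.labE e = H.labE (f.fe e)

/-- An injective graph morphism: a graph morphism whose node and edge
components are injective on the node and edge sets of the domain. -/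
structure IsInjMorphism {V₁ E₁ V₂ E₂ X Y : Type}
    (G : PreGraph V₁ E₁ X Y) (H : PreGraph V₂ E₂ X Y)
    (f : PreMorph V₁ E₁ V₂ E₂) extends IsMorphism G H f : Prop where
  injV : Set.InjOn f.fv G.nodes
  injE : Set.InjOn f.fe G.edges

/-- The dangling condition for `g : L → G` relative to `b' : K → L`:
no edge in `E_G − g_E(E_L)` is incident to a node in `g_V(V_L − b'_V(V_K))`. -/
def Dangling {VK EK VL EL VG EG X Y : Type}
    (K : PreGraph VK EK X Y) (L : PreGraph VL EL X Y) (G : PreGraph VG EG X Y)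
    (b' : PreMorph VK EK VL EL) (g : PreMorph VL EL VG EG) : Prop :=
  ∀ e ∈ G.edges \ g.fe '' L.edges,
    G.src e ∉ g.fv '' (L.nodes \ b'.fv '' K.nodes) ∧
    G.tgt e ∉ g.fv '' (L.nodes \ b'.fv '' K.nodes)

/-- The deletion of `L` and `G` according to `g`: the subgraph of `G` with
`V_D = V_G − g_V(V_L − b'_V(V_K))` and `E_D = E_G − g_E(E_L − b'_E(E_K))`,
with source, target and labelling functions inherited from `G`. -/
def Deletion {VK EK VL EL VG EG X Y : Type}
    (K : PreGraph VK EK X Y) (L : PreGraph VL EL X Y) (G : PreGraph VG EG X Y)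
    (b' : PreMorph VK EK VL EL) (g : PreMorph VL EL VG EG) :
    PreGraph VG EG X Y :=
  { G with
    nodes := G.nodes \ g.fv '' (L.nodes \ b'.fv '' K.nodes)
    edges := G.edges \ g.fe '' (L.edges \ b'.fe '' K.edges) }

/-- the deletion of `L` and `G` according to `g` is a well-formed
labelled directed graph. -/
theorem deletion_isGraph {VK EK VL EL VG EG X Y : Type}
    (K : PreGraph VK EK X Y) (L : PreGraph VL EL X Y) (G : PreGraph VG EG X Y)
    (b' : PreMorph VK EK VL EL) (g : PreMorph VL EL VG EG)
    (hK : K.IsGraph) (hL : L.IsGraph) (hG : G.IsGraph)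
    (hb' : IsInjMorphism K L b') (hg : IsInjMorphism L G g)
    (hdang : Dangling K L G b' g) :
    (Deletion K L G b' g).IsGraph := by
  have key : ∀ e ∈ (Deletion K L G b' g).edges,
      ∀ x : VG, (x = G.src e ∨ x = G.tgt e) →
      x ∈ (Deletion K L G b' g).nodes := by
    rintro e ⟨heG, heD⟩ x hx
    constructor
    · rcases hx with h | h <;> subst h
      · exact hG.src_mem e heG
      · exact hG.tgt_mem e heG
    · by_cases hcase : e ∈ g.fe '' L.edges
      · rcases hcase with ⟨e', he'L, rfl⟩
        have he'K : e' ∈ b'.fe '' K.edges := by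
          by_contra hnot
          exact heD ⟨e', ⟨he'L, hnot⟩, rfl⟩
        rcases he'K with ⟨k, hkK, rfl⟩
        rintro ⟨w, ⟨hwL, hwK⟩, hw⟩
        have hsrc' : g.fv (L.src (b'.fe k)) = G.src (g.fe (b'.fe k)) :=
          hg.src_pres _ he'L
        have htgt' : g.fv (L.tgt (b'.fe k)) = G.tgt (g.fe (b'.fe k)) :=
          hg.tgt_pres _ he'L
        have hw' : ∃ u ∈ L.nodes, u ∈ b'.fv '' K.nodes ∧ g.fv u = x := by
          rcases hx with h | h <;> subst h
          · refine ⟨L.src (b'.fe k), hL.src_mem _ he'L, ?_, hsrc'⟩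
            refine ⟨K.src k, hK.src_mem k hkK, ?_⟩
            exact (hb'.src_pres k hkK).symm ▸ rfl
          · refine ⟨L.tgt (b'.fe k), hL.tgt_mem _ he'L, ?_, htgt'⟩
            refine ⟨K.tgt k, hK.tgt_mem k hkK, ?_⟩
            exact (hb'.tgt_pres k hkK).symm ▸ rfl
        rcases hw' with ⟨u, huL, huK, hu⟩
        have : w = u := hg.injV hwL huL (hw.trans hu.symm)
        exact hwK (this ▸ huK)
      · have := hdang e ⟨heG, hcase⟩
        rcases hx with h | h <;> subst h
        · exact this.1
        · exact this.2
  refine ⟨hG.finite_nodes.diff, hG.finite_edges.diff, ?_, ?_⟩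
  · exact fun e he => key e he _ (Or.inl rfl)
  · exact fun e he => key e he _ (Or.inr rfl)
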